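/- arXiv:2511.00667 — 2 statements merged into one kernel-verified Lean document; each statement's English description precedes it below -/
import Mathlib

section
/- Let t > 0 and γ_t(θ) = -e^{-iθ} h_t(θ) with h_t(θ) = [arctan(t - cot θ) + arctan(cot θ)]/sin θ extended smoothly across multiples of π. Then Im[conj(γ_t'(θ)) γ_t''(θ)] < 0 for all θ ∈ (0, π). -/
set_option maxHeartbeats 1000000
open Real


private lemma arctan_pos' {w : ℝ} (hw : 0 < w) : 0 < Real.arctan w := by
  rw [← Real.arctan_zero]; exact Real.arctan_strictMono hw

private lemma arctan_nonneg' {w : ℝ} (hw : 0 ≤ w) : 0 ≤ Real.arctan w := by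
  rw [← Real.arctan_zero]; exact Real.arctan_strictMono.monotone hw

private lemma arctan_le_self' {w : ℝ} (hw : 0 ≤ w) : Real.arctan w ≤ w := by
  have h2 := Real.le_tan (arctan_nonneg' hw) (Real.arctan_lt_pi_div_two w)
  rwa [Real.tan_arctan] at h2

private lemma aux_neg (x y : ℝ) (hx : x < 0) (hxy : 0 < x + y) :
    0 < 2 * ((1 + x ^ 2)⁻¹ - (1 + y ^ 2)⁻¹) ^ 2
      + (Real.arctan x + Real.arctan y) *
        (2 * x * ((1 + x ^ 2)⁻¹) ^ 2 + 2 * y * ((1 + y ^ 2)⁻¹) ^ 2) := by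
  have hy : 0 < y := by linarith
  have hxy1 : x * y < 1 := by nlinarith
  have hpx : (0:ℝ) < 1 + x ^ 2 := by positivity
  have hpy : (0:ℝ) < 1 + y ^ 2 := by positivity
  have hden : 0 < 1 - x * y := by linarith
  have hw : 0 < (x + y) / (1 - x * y) := div_pos hxy hden
  have hpsi : Real.arctan x + Real.arctan y = Real.arctan ((x + y) / (1 - x * y)) :=
    Real.arctan_add hxy1
  have hpsipos : 0 < Real.arctan x + Real.arctan y := by
    rw [hpsi]; exact arctan_pos' hw
  set s : ℝ := 2 * x * ((1 + x ^ 2)⁻¹) ^ 2 + 2 * y * ((1 + y ^ 2)⁻¹) ^ 2 with hs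
  clear_value s
  rcases le_or_gt 0 s with hs0 | hs0
  · have hx2y2 : x ^ 2 < y ^ 2 := by nlinarith
    have hab : (1 + y ^ 2)⁻¹ < (1 + x ^ 2)⁻¹ := by
      apply inv_strictAnti₀ hpx; linarith
    have habp : 0 < ((1 + x ^ 2)⁻¹ - (1 + y ^ 2)⁻¹) ^ 2 :=
      pow_pos (sub_pos.mpr hab) 2
    linarith [mul_nonneg hpsipos.le hs0]
  · have hub : Real.arctan x + Real.arctan y ≤ (x + y) / (1 - x * y) := by
      rw [hpsi]; exact arctan_le_self' hw.le
    have hmul : ((x + y) / (1 - x * y)) * s ≤ (Real.arctan x + Real.arctan y) * s :=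
      mul_le_mul_of_nonpos_right hub hs0.le
    have key : 2 * ((1 + x ^ 2)⁻¹ - (1 + y ^ 2)⁻¹) ^ 2 + ((x + y) / (1 - x * y)) * s
        = 2 * (x + y) ^ 2 / ((1 + x ^ 2) * (1 + y ^ 2) * (1 - x * y)) := by
      rw [hs]
      have h1 : (1:ℝ) + x ^ 2 ≠ 0 := by positivity
      have h2 : (1:ℝ) + y ^ 2 ≠ 0 := by positivity
      field_simp
      ring
    have : 0 < 2 * (x + y) ^ 2 / ((1 + x ^ 2) * (1 + y ^ 2) * (1 - x * y)) := by positivity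
    linarith

private lemma key_ineq (t x : ℝ) (ht : 0 < t) :
    0 < 2 * ((1 + x ^ 2)⁻¹ - (1 + (t - x) ^ 2)⁻¹) ^ 2
      + (Real.arctan (t - x) + Real.arctan x) *
        (2 * x * ((1 + x ^ 2)⁻¹) ^ 2 + 2 * (t - x) * ((1 + (t - x) ^ 2)⁻¹) ^ 2) := by
  set y : ℝ := t - x with hy
  rcases lt_trichotomy x 0 with hx | hx | hx
  · have H := aux_neg x y hx (by rw [hy]; linarith)
    linarith [H, (by ring :
      2 * ((1 + x ^ 2)⁻¹ - (1 + y ^ 2)⁻¹) ^ 2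
      + (Real.arctan x + Real.arctan y) *
        (2 * x * ((1 + x ^ 2)⁻¹) ^ 2 + 2 * y * ((1 + y ^ 2)⁻¹) ^ 2)
      = 2 * ((1 + x ^ 2)⁻¹ - (1 + y ^ 2)⁻¹) ^ 2
      + (Real.arctan y + Real.arctan x) *
        (2 * x * ((1 + x ^ 2)⁻¹) ^ 2 + 2 * y * ((1 + y ^ 2)⁻¹) ^ 2))]
  · subst hx
    have hyt : y = t := by rw [hy]; ring
    have h1 : 0 < Real.arctan y + Real.arctan 0 := by
      rw [Real.arctan_zero, add_zero]; exact arctan_pos' (by rw [hyt]; exact ht)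
    have h2 : 0 < 2 * (0:ℝ) * ((1 + (0:ℝ) ^ 2)⁻¹) ^ 2 + 2 * y * ((1 + y ^ 2)⁻¹) ^ 2 := by
      rw [hyt]; positivity
    nlinarith [sq_nonneg ((1 + (0:ℝ) ^ 2)⁻¹ - (1 + y ^ 2)⁻¹)]
  · rcases lt_trichotomy y 0 with hyneg | hy0 | hypos
    · have H := aux_neg y x hyneg (by rw [hy]; linarith)
      linarith [H, (by ring :
        2 * ((1 + y ^ 2)⁻¹ - (1 + x ^ 2)⁻¹) ^ 2
        + (Real.arctan y + Real.arctan x) *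
          (2 * y * ((1 + y ^ 2)⁻¹) ^ 2 + 2 * x * ((1 + x ^ 2)⁻¹) ^ 2)
        = 2 * ((1 + x ^ 2)⁻¹ - (1 + y ^ 2)⁻¹) ^ 2
        + (Real.arctan y + Real.arctan x) *
          (2 * x * ((1 + x ^ 2)⁻¹) ^ 2 + 2 * y * ((1 + y ^ 2)⁻¹) ^ 2))]
    · have h1 : 0 < Real.arctan y + Real.arctan x := by
        rw [hy0, Real.arctan_zero, zero_add]; exact arctan_pos' hx
      have h2 : 0 < 2 * x * ((1 + x ^ 2)⁻¹) ^ 2 + 2 * y * ((1 + y ^ 2)⁻¹) ^ 2 := by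
        rw [hy0]; positivity
      nlinarith [sq_nonneg ((1 + x ^ 2)⁻¹ - (1 + y ^ 2)⁻¹)]
    · have h1 : 0 < Real.arctan y + Real.arctan x :=
        add_pos (arctan_pos' hypos) (arctan_pos' hx)
      have h2 : 0 < 2 * x * ((1 + x ^ 2)⁻¹) ^ 2 + 2 * y * ((1 + y ^ 2)⁻¹) ^ 2 := by positivity
      nlinarith [sq_nonneg ((1 + x ^ 2)⁻¹ - (1 + y ^ 2)⁻¹)]


noncomputable def gg (t θ : ℝ) : ℝ :=
  (Real.arctan (t - Real.cos θ / Real.sin θ) + Real.arctan (Real.cos θ / Real.sin θ)) / Real.sin θ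

noncomputable def gg1 (t θ : ℝ) : ℝ :=
  -(((1 + (Real.cos θ / Real.sin θ) ^ 2)⁻¹ - (1 + (t - Real.cos θ / Real.sin θ) ^ 2)⁻¹) /
      Real.sin θ ^ 3)
  - (Real.arctan (t - Real.cos θ / Real.sin θ) + Real.arctan (Real.cos θ / Real.sin θ)) *
      Real.cos θ / Real.sin θ ^ 2

noncomputable def gg2 (t θ : ℝ) : ℝ :=
  (-2 * (Real.cos θ / Real.sin θ) * ((1 + (Real.cos θ / Real.sin θ) ^ 2)⁻¹) ^ 2
    - 2 * (t - Real.cos θ / Real.sin θ) * ((1 + (t - Real.cos θ / Real.sin θ) ^ 2)⁻¹) ^ 2) /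
      Real.sin θ ^ 5
  + 4 * Real.cos θ * ((1 + (Real.cos θ / Real.sin θ) ^ 2)⁻¹
      - (1 + (t - Real.cos θ / Real.sin θ) ^ 2)⁻¹) / Real.sin θ ^ 4
  + (Real.arctan (t - Real.cos θ / Real.sin θ) + Real.arctan (Real.cos θ / Real.sin θ)) *
      (Real.sin θ ^ 2 + 2 * Real.cos θ ^ 2) / Real.sin θ ^ 3

private lemma hasDerivAt_cot (θ : ℝ) (hs : Real.sin θ ≠ 0) :
    HasDerivAt (fun θ : ℝ => Real.cos θ / Real.sin θ) (-(1 / Real.sin θ ^ 2)) θ := by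
  have H := (Real.hasDerivAt_cos θ).div (Real.hasDerivAt_sin θ) hs
  refine H.congr_deriv ?_
  have hpy := Real.sin_sq_add_cos_sq θ
  field_simp
  linarith

private lemma hasDerivAt_gg (t θ : ℝ) (hs : Real.sin θ ≠ 0) :
    HasDerivAt (gg t) (gg1 t θ) θ := by
  have hu := hasDerivAt_cot θ hs
  have h1 : HasDerivAt (fun θ : ℝ => Real.arctan (t - Real.cos θ / Real.sin θ))
      (1 / (1 + (t - Real.cos θ / Real.sin θ) ^ 2) * (0 - -(1 / Real.sin θ ^ 2))) θ :=
    ((hasDerivAt_const θ t).sub hu).arctan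
  have h2 : HasDerivAt (fun θ : ℝ => Real.arctan (Real.cos θ / Real.sin θ))
      (1 / (1 + (Real.cos θ / Real.sin θ) ^ 2) * -(1 / Real.sin θ ^ 2)) θ := hu.arctan
  have H := (h1.add h2).div (Real.hasDerivAt_sin θ) hs
  have hx : (1 : ℝ) + (Real.cos θ / Real.sin θ) ^ 2 ≠ 0 := by positivity
  have hy : (1 : ℝ) + (t - Real.cos θ / Real.sin θ) ^ 2 ≠ 0 := by positivity
  refine H.congr_deriv ?_
  unfold gg1
  simp only [Pi.add_apply, Pi.sub_apply, Pi.mul_apply, Pi.div_apply, Pi.neg_apply, Pi.pow_apply]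
  generalize Real.arctan (t - Real.cos θ / Real.sin θ) = A
  generalize Real.arctan (Real.cos θ / Real.sin θ) = B
  field_simp
  ring

private lemma hasDerivAt_gg1 (t θ : ℝ) (hs : Real.sin θ ≠ 0) :
    HasDerivAt (gg1 t) (gg2 t θ) θ := by
  have hu := hasDerivAt_cot θ hs
  have hx : (1 : ℝ) + (Real.cos θ / Real.sin θ) ^ 2 ≠ 0 := by positivity
  have hy : (1 : ℝ) + (t - Real.cos θ / Real.sin θ) ^ 2 ≠ 0 := by positivity
  have hA : HasDerivAt (fun θ : ℝ => (1 + (Real.cos θ / Real.sin θ) ^ 2)⁻¹)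
      (-(0 + (2 : ℕ) * (Real.cos θ / Real.sin θ) ^ (2 - 1) * -(1 / Real.sin θ ^ 2)) /
        (1 + (Real.cos θ / Real.sin θ) ^ 2) ^ 2) θ :=
    ((hasDerivAt_const θ (1 : ℝ)).add (hu.pow 2)).inv hx
  have hB : HasDerivAt (fun θ : ℝ => (1 + (t - Real.cos θ / Real.sin θ) ^ 2)⁻¹)
      (-(0 + (2 : ℕ) * (t - Real.cos θ / Real.sin θ) ^ (2 - 1) * (0 - -(1 / Real.sin θ ^ 2))) /
        (1 + (t - Real.cos θ / Real.sin θ) ^ 2) ^ 2) θ :=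
    ((hasDerivAt_const θ (1 : ℝ)).add (((hasDerivAt_const θ t).sub hu).pow 2)).inv hy
  have h1 : HasDerivAt (fun θ : ℝ => Real.arctan (t - Real.cos θ / Real.sin θ))
      (1 / (1 + (t - Real.cos θ / Real.sin θ) ^ 2) * (0 - -(1 / Real.sin θ ^ 2))) θ :=
    ((hasDerivAt_const θ t).sub hu).arctan
  have h2 : HasDerivAt (fun θ : ℝ => Real.arctan (Real.cos θ / Real.sin θ))
      (1 / (1 + (Real.cos θ / Real.sin θ) ^ 2) * -(1 / Real.sin θ ^ 2)) θ := hu.arctan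
  have hS3 := (Real.hasDerivAt_sin θ).pow 3
  have hS2 := (Real.hasDerivAt_sin θ).pow 2
  have hs3 : Real.sin θ ^ 3 ≠ 0 := pow_ne_zero _ hs
  have hs2 : Real.sin θ ^ 2 ≠ 0 := pow_ne_zero _ hs
  have term1 := (((hA.sub hB).div hS3 hs3)).neg
  have term2 := ((h1.add h2).mul (Real.hasDerivAt_cos θ)).div hS2 hs2
  have H := term1.sub term2
  refine H.congr_deriv ?_
  unfold gg2
  simp only [Pi.add_apply, Pi.sub_apply, Pi.mul_apply, Pi.div_apply, Pi.neg_apply, Pi.pow_apply]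
  generalize Real.arctan (t - Real.cos θ / Real.sin θ) = A
  generalize Real.arctan (Real.cos θ / Real.sin θ) = B
  generalize Real.cos θ / Real.sin θ = c at hx hy ⊢
  field_simp
  ring

noncomputable def Γ (t : ℝ) : ℝ → ℂ := fun θ : ℝ =>
  -Complex.exp (-(θ : ℂ) * Complex.I) *
    (((Real.arctan (t - Real.cos θ / Real.sin θ) +
        Real.arctan (Real.cos θ / Real.sin θ)) / Real.sin θ : ℝ) : ℂ)

noncomputable def FF1 (t θ : ℝ) : ℂ :=
  Complex.exp (-(θ : ℂ) * Complex.I) *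
    (Complex.I * ((gg t θ : ℝ) : ℂ) - ((gg1 t θ : ℝ) : ℂ))

noncomputable def FF2 (t θ : ℝ) : ℂ :=
  Complex.exp (-(θ : ℂ) * Complex.I) *
    ((((gg t θ : ℝ) : ℂ) - ((gg2 t θ : ℝ) : ℂ)) + 2 * Complex.I * ((gg1 t θ : ℝ) : ℂ))

private lemma hasDerivAt_cexp (θ : ℝ) :
    HasDerivAt (fun θ : ℝ => Complex.exp (-(θ : ℂ) * Complex.I))
      (Complex.exp (-(θ : ℂ) * Complex.I) * (-1 * Complex.I)) θ := by
  have hz : HasDerivAt (fun z : ℂ => Complex.exp (-z * Complex.I))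
      (Complex.exp (-(θ : ℂ) * Complex.I) * (-1 * Complex.I)) ((θ : ℝ) : ℂ) :=
    ((hasDerivAt_id ((θ : ℝ) : ℂ)).neg.mul_const Complex.I).cexp
  exact hz.comp_ofReal

private lemma hasDerivAt_Γ (t θ : ℝ) (hs : Real.sin θ ≠ 0) :
    HasDerivAt (Γ t) (FF1 t θ) θ := by
  have hE := hasDerivAt_cexp θ
  have hgR := (hasDerivAt_gg t θ hs).ofReal_comp
  have H := hE.neg.mul hgR
  have hval : FF1 t θ =
      -(Complex.exp (-(θ : ℂ) * Complex.I) * (-1 * Complex.I)) * ((gg t θ : ℝ) : ℂ)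
      + -Complex.exp (-(θ : ℂ) * Complex.I) * ((gg1 t θ : ℝ) : ℂ) := by
    unfold FF1; ring
  rw [hval]
  exact H

private lemma hasDerivAt_FF1 (t θ : ℝ) (hs : Real.sin θ ≠ 0) :
    HasDerivAt (FF1 t) (FF2 t θ) θ := by
  have hE := hasDerivAt_cexp θ
  have hgR := (hasDerivAt_gg t θ hs).ofReal_comp
  have hg1R := (hasDerivAt_gg1 t θ hs).ofReal_comp
  have hinner := (hgR.const_mul Complex.I).sub hg1R
  have H := hE.mul hinner
  have hval : FF2 t θ =
      Complex.exp (-(θ : ℂ) * Complex.I) * (-1 * Complex.I) *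
        (Complex.I * ((gg t θ : ℝ) : ℂ) - ((gg1 t θ : ℝ) : ℂ))
      + Complex.exp (-(θ : ℂ) * Complex.I) *
        (Complex.I * ((gg1 t θ : ℝ) : ℂ) - ((gg2 t θ : ℝ) : ℂ)) := by
    unfold FF2
    linear_combination (Complex.exp (-(θ : ℂ) * Complex.I) * ((gg t θ : ℝ) : ℂ)) * Complex.I_sq
  rw [hval]
  exact H
theorem gamma_curvature_negative (t : ℝ) (ht : 0 < t) (θ : ℝ)
    (hθ : θ ∈ Set.Ioo 0 Real.pi) :
    ((starRingEnd ℂ)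
        (deriv (fun θ : ℝ => -Complex.exp (-(θ : ℂ) * Complex.I) *
          (((Real.arctan (t - Real.cos θ / Real.sin θ) +
            Real.arctan (Real.cos θ / Real.sin θ)) / Real.sin θ : ℝ) : ℂ)) θ) *
      deriv (deriv (fun θ : ℝ => -Complex.exp (-(θ : ℂ) * Complex.I) *
          (((Real.arctan (t - Real.cos θ / Real.sin θ) +
            Real.arctan (Real.cos θ / Real.sin θ)) / Real.sin θ : ℝ) : ℂ))) θ).im
      < 0 := by
  obtain ⟨h0, hπ⟩ := hθ
  have hspos : 0 < Real.sin θ := Real.sin_pos_of_pos_of_lt_pi h0 hπ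
  have hs : Real.sin θ ≠ 0 := ne_of_gt hspos
  show ((starRingEnd ℂ) (deriv (Γ t) θ) * deriv (deriv (Γ t)) θ).im < 0
  have hd1 : deriv (Γ t) θ = FF1 t θ := (hasDerivAt_Γ t θ hs).deriv
  have hev : deriv (Γ t) =ᶠ[nhds θ] FF1 t := by
    filter_upwards [isOpen_Ioo.mem_nhds (show θ ∈ Set.Ioo 0 Real.pi from ⟨h0, hπ⟩)] with x hx
    exact (hasDerivAt_Γ t x (ne_of_gt (Real.sin_pos_of_pos_of_lt_pi hx.1 hx.2))).deriv
  have hd2 : deriv (deriv (Γ t)) θ = FF2 t θ := by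
    rw [hev.deriv_eq]; exact (hasDerivAt_FF1 t θ hs).deriv
  rw [hd1, hd2]
  have hc : (starRingEnd ℂ) (Complex.exp (-(θ : ℂ) * Complex.I))
      = Complex.exp ((θ : ℂ) * Complex.I) := by
    rw [← Complex.exp_conj]; congr 1; simp
  have hEE : Complex.exp ((θ : ℂ) * Complex.I) * Complex.exp (-(θ : ℂ) * Complex.I) = 1 := by
    rw [← Complex.exp_add]; simp
  have key : (starRingEnd ℂ) (FF1 t θ) * FF2 t θ
      = (-Complex.I * ((gg t θ : ℝ) : ℂ) - ((gg1 t θ : ℝ) : ℂ)) *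
        ((((gg t θ : ℝ) : ℂ) - ((gg2 t θ : ℝ) : ℂ)) + 2 * Complex.I * ((gg1 t θ : ℝ) : ℂ)) := by
    unfold FF1 FF2
    rw [map_mul, hc, map_sub, map_mul, Complex.conj_I, Complex.conj_ofReal, Complex.conj_ofReal]
    calc Complex.exp ((θ : ℂ) * Complex.I) *
          (-Complex.I * ((gg t θ : ℝ) : ℂ) - ((gg1 t θ : ℝ) : ℂ)) *
          (Complex.exp (-(θ : ℂ) * Complex.I) *
            ((((gg t θ : ℝ) : ℂ) - ((gg2 t θ : ℝ) : ℂ)) +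
              2 * Complex.I * ((gg1 t θ : ℝ) : ℂ)))
        = (Complex.exp ((θ : ℂ) * Complex.I) * Complex.exp (-(θ : ℂ) * Complex.I)) *
          ((-Complex.I * ((gg t θ : ℝ) : ℂ) - ((gg1 t θ : ℝ) : ℂ)) *
            ((((gg t θ : ℝ) : ℂ) - ((gg2 t θ : ℝ) : ℂ)) +
              2 * Complex.I * ((gg1 t θ : ℝ) : ℂ))) := by ring
      _ = _ := by rw [hEE, one_mul]
  rw [key]
  have him : ((-Complex.I * ((gg t θ : ℝ) : ℂ) - ((gg1 t θ : ℝ) : ℂ)) *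
        ((((gg t θ : ℝ) : ℂ) - ((gg2 t θ : ℝ) : ℂ)) +
          2 * Complex.I * ((gg1 t θ : ℝ) : ℂ))).im
      = gg t θ * gg2 t θ - gg t θ ^ 2 - 2 * gg1 t θ ^ 2 := by
    simp [Complex.mul_im, Complex.add_im, Complex.sub_im, Complex.mul_re, Complex.add_re,
      Complex.sub_re, Complex.I_re, Complex.I_im, Complex.ofReal_re, Complex.ofReal_im]
    ring
  rw [him]
  have hkey := key_ineq t (Real.cos θ / Real.sin θ) ht
  have hident : gg t θ ^ 2 + 2 * gg1 t θ ^ 2 - gg t θ * gg2 t θ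
      = (2 * ((1 + (Real.cos θ / Real.sin θ) ^ 2)⁻¹
            - (1 + (t - Real.cos θ / Real.sin θ) ^ 2)⁻¹) ^ 2
        + (Real.arctan (t - Real.cos θ / Real.sin θ) + Real.arctan (Real.cos θ / Real.sin θ)) *
          (2 * (Real.cos θ / Real.sin θ) * ((1 + (Real.cos θ / Real.sin θ) ^ 2)⁻¹) ^ 2
            + 2 * (t - Real.cos θ / Real.sin θ) *
              ((1 + (t - Real.cos θ / Real.sin θ) ^ 2)⁻¹) ^ 2)) / Real.sin θ ^ 6 := by
    have hx : (1 : ℝ) + (Real.cos θ / Real.sin θ) ^ 2 ≠ 0 := by positivity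
    have hy : (1 : ℝ) + (t - Real.cos θ / Real.sin θ) ^ 2 ≠ 0 := by positivity
    unfold gg gg1 gg2
    field_simp
    ring
  have hpos : 0 < gg t θ ^ 2 + 2 * gg1 t θ ^ 2 - gg t θ * gg2 t θ := by
    rw [hident]
    exact div_pos hkey (by positivity)
  linarith
end

section
/- Let t ≥ 2 and define the rescaled phase h̃_t(σ) = h_t(1/t + σ/t²)/t where h_t(θ) = [arctan(t - cot θ) + arctan(cot θ)]/sin θ. Then for each fixed σ ∈ ℝ, h̃_t(σ) → π/2 + arctan(σ) as t → ∞; moreover, on any compact interval [-1/δ, 1/δ] the convergence is uniform with rate O_δ(1/t). -/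
lemma abs_arctan_sub_le (a b : ℝ) : |Real.arctan a - Real.arctan b| ≤ |a - b| := by
  have h : LipschitzWith 1 Real.arctan := by
    apply lipschitzWith_of_nnnorm_deriv_le Real.differentiable_arctan
    intro x
    have hd : deriv Real.arctan x = 1 / (1 + x ^ 2) := by rw [Real.deriv_arctan]
    rw [← NNReal.coe_le_coe, coe_nnnorm, NNReal.coe_one, hd, Real.norm_eq_abs,
      abs_of_pos (by positivity), div_le_one (by positivity)]
    nlinarith [sq_nonneg x]
  have := h.dist_le_mul a b
  simpa [Real.dist_eq] using this

lemma arctan_le_self'_s19 {x : ℝ} (hx : 0 ≤ x) : Real.arctan x ≤ x := by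
  rcases eq_or_lt_of_le hx with h | h
  · simp [← h]
  · have h1 : 0 < Real.arctan x := by
      rw [← Real.arctan_zero]; exact Real.arctan_strictMono h
    have h2 := Real.lt_tan h1 (Real.arctan_lt_pi_div_two x)
    rw [Real.tan_arctan] at h2
    linarith

lemma pi_div_two_sub_arctan_le {x : ℝ} (hx : 0 < x) : Real.pi / 2 - Real.arctan x ≤ 1 / x := by
  have h1 := Real.arctan_inv_of_pos hx
  have h2 : Real.arctan x⁻¹ ≤ x⁻¹ := arctan_le_self'_s19 (by positivity)
  rw [h1] at h2
  simpa [one_div] using h2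



-- core bound valid for any angle θ, 0 < t ≤ 3
lemma core_bound (θ t : ℝ) (ht0 : 0 < t) (ht3 : t ≤ 3) :
    |(Real.arctan (t - Real.cos θ / Real.sin θ) + Real.arctan (Real.cos θ / Real.sin θ)) /
      Real.sin θ| ≤ 10 * Real.pi := by
  set s := Real.sin θ with hs
  set co := Real.cos θ with hco
  set c := co / s with hc
  set A := Real.arctan (t - c) + Real.arctan c with hA
  have hpi := Real.pi_gt_three
  have hAπ : |A| ≤ Real.pi := by
    have h1 := Real.arctan_lt_pi_div_two (t - c)
    have h2 := Real.neg_pi_div_two_lt_arctan (t - c)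
    have h3 := Real.arctan_lt_pi_div_two c
    have h4 := Real.neg_pi_div_two_lt_arctan c
    rw [abs_le]; constructor <;> [linarith; linarith]
  by_cases hs0 : s = 0
  · rw [hs0, div_zero, abs_zero]; positivity
  rcases le_or_gt (1/10 : ℝ) |s| with h10 | h10
  · rw [abs_div]
    calc |A| / |s| ≤ Real.pi / (1/10) := by
          apply div_le_div₀ Real.pi_pos.le hAπ (by norm_num) h10
      _ = 10 * Real.pi := by ring
  · -- small sine: cancellation
    have hs_pos : 0 < |s| := abs_pos.mpr hs0
    have hco2 : co ^ 2 = 1 - s ^ 2 := by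
      have := Real.sin_sq_add_cos_sq θ; nlinarith [this]
    have hco9 : 9/10 ≤ |co| := by
      nlinarith [sq_abs co, sq_abs s, abs_nonneg co, abs_nonneg s]
    have hc_abs : |s| * |c| = |co| := by
      rw [hc, abs_div]; field_simp
    have hc9 : 9 ≤ |c| := by
      nlinarith [hc_abs, hs_pos, abs_nonneg c]
    have hc0 : c ≠ 0 := by
      intro h; rw [h, abs_zero] at hc9; linarith
    have hkey : |A| ≤ 2 * |s| := by
      rcases hc0.lt_or_gt with hneg | hpos
      · -- c < 0
        have hd : |c| = -c := abs_of_neg hneg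
        have hd9 : 9 ≤ -c := by linarith [hc9.trans_eq hd]
        have hmono : Real.arctan (-c) ≤ Real.arctan (t - c) :=
          Real.arctan_strictMono.monotone (by linarith)
        have hup : Real.pi/2 - Real.arctan (-c) ≤ 1 / (-c) :=
          pi_div_two_sub_arctan_le (by linarith)
        have hAeq : A = Real.arctan (t - c) - Real.arctan (-c) := by
          rw [hA, Real.arctan_neg]; ring
        have h1c : 1 / (-c) ≤ 2 * |s| := by
          rw [div_le_iff₀ (by linarith)]
          have : |s| * (-c) = |co| := by rw [← hc_abs, hd]
          nlinarith [hco9]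
        have hAle : A ≤ 2 * |s| := by
          rw [hAeq]
          have := Real.arctan_lt_pi_div_two (t - c)
          linarith
        have hA0 : 0 ≤ A := by rw [hAeq]; linarith
        rw [abs_of_nonneg hA0]; exact hAle
      · -- c > 0
        have hd : |c| = c := abs_of_pos hpos
        have hc9' : 9 ≤ c := hd ▸ hc9
        have hct : 2/3 * c ≤ c - t := by linarith
        have hct0 : 0 < c - t := by linarith
        have hmono : Real.arctan (c - t) ≤ Real.arctan c :=
          Real.arctan_strictMono.monotone (by linarith)
        have hup : Real.pi/2 - Real.arctan (c - t) ≤ 1 / (c - t) :=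
          pi_div_two_sub_arctan_le hct0
        have hAeq : A = Real.arctan c - Real.arctan (c - t) := by
          rw [hA, show t - c = -(c - t) by ring, Real.arctan_neg]; ring
        have h1c : 1 / (c - t) ≤ 2 * |s| := by
          rw [div_le_iff₀ hct0]
          have h5 : |s| * c = |co| := by rw [← hc_abs, hd]
          nlinarith [hco9, mul_le_mul_of_nonneg_left hct (abs_nonneg s)]
        have hAle : A ≤ 2 * |s| := by
          rw [hAeq]
          have := Real.arctan_lt_pi_div_two c
          linarith
        have hA0 : 0 ≤ A := by rw [hAeq]; linarith
        rw [abs_of_nonneg hA0]; exact hAle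
    rw [abs_div]
    calc |A| / |s| ≤ 2 * |s| / |s| := (div_le_div_iff_of_pos_right hs_pos).mpr hkey
      _ = 2 := by field_simp
      _ ≤ 10 * Real.pi := by linarith



set_option maxHeartbeats 1000000 in
lemma asymp_bound (δ t σ : ℝ) (hδ : 0 < δ) (htδ : 2 / δ ≤ t) (ht3 : 3 ≤ t)
    (hσ : |σ| ≤ 1 / δ) :
    |(Real.arctan (t - Real.cos (1 / t + σ / t ^ 2) / Real.sin (1 / t + σ / t ^ 2)) +
        Real.arctan (Real.cos (1 / t + σ / t ^ 2) / Real.sin (1 / t + σ / t ^ 2))) /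
        Real.sin (1 / t + σ / t ^ 2) / t -
      (Real.pi / 2 + Real.arctan σ)| ≤ (2 / δ ^ 2 + 9 / δ + 60) / t := by
  have ht0 : (0:ℝ) < t := by linarith
  obtain ⟨r, hrdef⟩ : ∃ r : ℝ, r = 1 / t := ⟨_, rfl⟩
  obtain ⟨u, hudef⟩ : ∃ u : ℝ, u = 1 / δ := ⟨_, rfl⟩
  have hr0 : 0 < r := by rw [hrdef]; positivity
  have hrt : t * r = 1 := by rw [hrdef]; field_simp
  have hr3 : r ≤ 1/3 := by rw [hrdef, div_le_iff₀ ht0]; linarith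
  have hσu' : |σ| ≤ u := hudef ▸ hσ
  have hu0 : 0 ≤ u := (abs_nonneg σ).trans hσu'
  have hut : u ≤ t / 2 := by
    rw [hudef, div_le_iff₀ hδ]
    rw [div_le_iff₀ hδ] at htδ
    linarith
  have hσ2 : |σ| ≤ t / 2 := hσu'.trans hut
  have hσl : -(t/2) ≤ σ := by have := neg_abs_le σ; linarith
  have hσu : σ ≤ t / 2 := (le_abs_self σ).trans hσ2
  have hσrl : -(1/2) ≤ σ * r := by
    have h1 := mul_le_mul_of_nonneg_right hσl hr0.le
    linarith only [h1, hrt]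
  have hσru : σ * r ≤ 1/2 := by
    have h1 := mul_le_mul_of_nonneg_right hσu hr0.le
    linarith only [h1, hrt]
  set θ : ℝ := 1 / t + σ / t ^ 2 with hθdef
  set s : ℝ := Real.sin θ with hsdef
  set co : ℝ := Real.cos θ with hcodef
  set c : ℝ := co / s with hcdef
  set A : ℝ := Real.arctan (t - c) + Real.arctan c with hAdef
  set L : ℝ := Real.pi / 2 + Real.arctan σ with hLdef
  clear_value L A c co s θ
  have hθr : θ = r + σ * r ^ 2 := by rw [hθdef, hrdef]; ring
  have hθl : r / 2 ≤ θ := by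
    rw [hθr]
    have h1 := mul_le_mul_of_nonneg_right hσrl hr0.le
    linarith only [h1]
  have hθu : θ ≤ 3/2 * r := by
    rw [hθr]
    have h1 := mul_le_mul_of_nonneg_right hσru hr0.le
    linarith only [h1]
  have hθ0 : 0 < θ := by linarith only [hθl, hr0]
  have hθh : θ ≤ 1/2 := by linarith only [hθu, hr3, hr0]
  have hθ2 : θ ^ 2 ≤ 1/4 := by
    have h1 := mul_le_mul hθh hθh hθ0.le (by norm_num : (0:ℝ) ≤ 1/2)
    linarith only [h1]
  have hθ3 : θ ^ 3 ≤ θ / 4 := by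
    have h1 := mul_le_mul_of_nonneg_left hθ2 hθ0.le
    linarith only [h1]
  -- sine bounds
  have hs_lt : s < θ := by rw [hsdef]; exact Real.sin_lt hθ0
  have hs_gt : θ - θ ^ 3 / 4 < s := by
    rw [hsdef]; have h := Real.sin_gt_sub_cube hθ0; linarith [pow_pos hθ0 3]
  have hs_low : 15/16 * θ ≤ s := by linarith only [hs_gt, hθ3]
  have hs_pos : 0 < s := by linarith only [hs_low, hθ0]
  -- cosine bounds
  have hcb := Real.cos_bound (x := θ) (by rw [abs_of_pos hθ0]; linarith only [hθh])
  rw [abs_of_pos hθ0, abs_le, ← hcodef] at hcb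
  have hθ4 : θ ^ 4 ≤ θ ^ 2 / 4 := by
    have h1 := mul_le_mul_of_nonneg_left hθ2 (sq_nonneg θ)
    linarith only [h1]
  have hco_up : co ≤ 1 - θ ^ 2 / 4 := by linarith only [hcb.2, hθ4, hθ2, sq_nonneg θ]
  have hco_low : 1 - θ ^ 2 ≤ co := by linarith only [hcb.1, hθ4, hθ2, sq_nonneg θ]
  have hco_pos : 0 < co := by linarith only [hco_low, hθ2]
  -- q = 1/θ
  obtain ⟨q, hqdef⟩ : ∃ q : ℝ, q = 1 / θ := ⟨_, rfl⟩
  have hq0 : 0 < q := by rw [hqdef]; positivity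
  have hθq : θ * q = 1 := by rw [hqdef]; field_simp
  have hq2 : 2 ≤ q := by
    have h1 := mul_le_mul_of_nonneg_right hθh hq0.le
    linarith only [h1, hθq, hq0]
  have hc_up : c ≤ q := by
    rw [hcdef, hqdef, div_le_div_iff₀ hs_pos hθ0]
    have h1 := mul_le_mul_of_nonneg_right hco_up hθ0.le
    linarith only [h1, hs_gt]
  have hc_low : q - θ ≤ c := by
    rw [hcdef, le_div_iff₀ hs_pos]
    have h1 : (q - θ) * s ≤ (q - θ) * θ :=
      mul_le_mul_of_nonneg_left hs_lt.le (by linarith only [hq2, hθh])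
    linarith only [h1, hθq, hco_low]
  -- q vs t - σ
  have hts0 : (0:ℝ) < t + σ := by linarith only [hσl, ht0]
  have hθr2 : θ * t ^ 2 = t + σ := by rw [hθdef]; field_simp
  have hqts : q * (t + σ) = t ^ 2 := by
    calc q * (t + σ) = q * (θ * t ^ 2) := by rw [hθr2]
      _ = (θ * q) * t ^ 2 := by ring
      _ = t ^ 2 := by rw [hθq]; ring
  have hq_ge : t - σ ≤ q := by
    nlinarith only [hqts, hts0, sq_nonneg σ]
  have hσsqu : σ ^ 2 ≤ u ^ 2 := by
    nlinarith only [sq_abs σ, abs_nonneg σ, hσu']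
  have hrtσ : σ ^ 2 * (t * r) = σ ^ 2 := by rw [hrt]; ring
  have hq_le : q ≤ t - σ + 2 * σ ^ 2 * r := by
    have m := mul_le_mul_of_nonneg_left hσrl (sq_nonneg σ)
    nlinarith only [hqts, hts0, hrtσ, m, sq_nonneg σ, hr0]
  -- |t - c - σ| small
  have hu2r : σ ^ 2 * r ≤ u ^ 2 * r := mul_le_mul_of_nonneg_right hσsqu hr0.le
  have huur : 0 ≤ u ^ 2 * r := mul_nonneg (sq_nonneg u) hr0.le
  have habs1 : |t - c - σ| ≤ (2 * u ^ 2 + 3/2) * r := by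
    rw [abs_le]
    constructor
    · linarith only [hq_le, hc_up, hu2r, hr0]
    · linarith only [hq_ge, hc_low, hθu, huur]
  -- c large
  have hc9 : t / 3 ≤ c := by
    linarith only [hc_low, hq_ge, hθu, hσu, hr3, hr0, ht3]
  have hc_pos : 0 < c := by linarith only [hc9, ht0]
  have harc2 : Real.pi / 2 - Real.arctan c ≤ 3 * r := by
    have h1 := pi_div_two_sub_arctan_le hc_pos
    have h2 : 1 / c ≤ 3 * r := by
      rw [div_le_iff₀ hc_pos]
      have h3 := mul_le_mul_of_nonneg_left hc9 hr0.le
      linarith only [h3, hrt]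
    linarith only [h1, h2]
  have hAL : |A - L| ≤ (2 * u ^ 2 + 3/2) * r + 3 * r := by
    have h1 : |Real.arctan (t - c) - Real.arctan σ| ≤ (2 * u ^ 2 + 3/2) * r :=
      (abs_arctan_sub_le _ _).trans habs1
    have h2 : |Real.arctan c - Real.pi / 2| ≤ 3 * r := by
      rw [abs_sub_comm, abs_of_nonneg (by linarith only [Real.arctan_lt_pi_div_two c])]
      linarith only [harc2]
    calc |A - L| = |(Real.arctan (t - c) - Real.arctan σ) + (Real.arctan c - Real.pi/2)| := by
          rw [hAdef, hLdef]; ring_nf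
      _ ≤ |Real.arctan (t - c) - Real.arctan σ| + |Real.arctan c - Real.pi/2| := abs_add_le _ _
      _ ≤ (2 * u ^ 2 + 3/2) * r + 3 * r := by linarith only [h1, h2]
  -- s*t bounds
  have hst_low : 15/32 ≤ s * t := by
    have h1 := mul_le_mul_of_nonneg_right hs_low ht0.le
    have h2 := mul_le_mul_of_nonneg_right hθl ht0.le
    linarith only [h1, h2, hrt]
  have hst_pos : 0 < s * t := by linarith only [hst_low]
  have h1ts : |1 - s * t| ≤ (u + 1) * r := by
    have hθt : θ * t = 1 + σ * r := by rw [hθr]; linear_combination (1 + σ * r) * hrt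
    have hr2t : r ^ 2 * (t * r) = r ^ 2 := by rw [hrt]; ring
    have ha := mul_le_mul_of_nonneg_right
      (show θ - s ≤ θ ^ 3 / 4 by linarith only [hs_gt]) ht0.le
    have hb := mul_le_mul_of_nonneg_right
      (pow_le_pow_left₀ hθ0.le hθu 3) ht0.le
    have hcc := mul_le_mul_of_nonneg_left hr3 hr0.le
    have h2 : (θ - s) * t ≤ r := by linarith only [ha, hb, hr2t, hcc, hr0]
    have h3 : 0 ≤ (θ - s) * t := mul_nonneg (by linarith only [hs_lt]) ht0.le
    have h4 : 1 - s * t = -(σ * r) + (θ - s) * t := by linarith only [hθt]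
    have h5 := mul_le_mul_of_nonneg_right (le_abs_self σ) hr0.le
    have h6 := mul_le_mul_of_nonneg_right (neg_abs_le σ) hr0.le
    have h7 := mul_le_mul_of_nonneg_right hσu' hr0.le
    rw [abs_le]
    constructor
    · linarith only [h4, h3, h5, h7, hr0]
    · linarith only [h4, h2, h6, h7]
  -- assemble
  have hAπ : |A| ≤ 4 := by
    have h1 := Real.arctan_lt_pi_div_two (t - c)
    have h2 := Real.neg_pi_div_two_lt_arctan (t - c)
    have h3 := Real.arctan_lt_pi_div_two c
    have h4 := Real.neg_pi_div_two_lt_arctan c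
    have h5 := Real.pi_le_four
    rw [hAdef, abs_le]
    constructor
    · linarith only [h2, h4, h5]
    · linarith only [h1, h3, h5]
  rw [div_div]
  have hst_ne : s * t ≠ 0 := ne_of_gt hst_pos
  have hsplit : A / (s * t) - L = (A - L) + A * (1 - s * t) / (s * t) := by
    field_simp
    ring
  rw [hsplit]
  have hur0 : 0 ≤ (u + 1) * r := mul_nonneg (by linarith only [hu0]) hr0.le
  have hsecond : |A * (1 - s * t) / (s * t)| ≤ 4 * ((u + 1) * r) / (15/32) := by
    rw [abs_div, abs_mul, abs_of_pos hst_pos]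
    apply div_le_div₀ (by linarith only [hur0]) ?_ (by norm_num) hst_low
    exact mul_le_mul hAπ h1ts (abs_nonneg _) (by norm_num)
  have hX : (2 / δ ^ 2 + 9 / δ + 60) / t = (2 * u ^ 2 + 9 * u + 60) * r := by
    rw [hudef, hrdef]; ring
  rw [hX]
  have hur : 0 ≤ u * r := mul_nonneg hu0 hr0.le
  calc |(A - L) + A * (1 - s * t) / (s * t)|
      ≤ |A - L| + |A * (1 - s * t) / (s * t)| := abs_add_le _ _
    _ ≤ ((2 * u ^ 2 + 3/2) * r + 3 * r) + 4 * ((u + 1) * r) / (15/32) := by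
        linarith only [hAL, hsecond]
    _ ≤ (2 * u ^ 2 + 9 * u + 60) * r := by linarith only [hur, hr0]


theorem rescaled_phase_convergence :
    (∀ σ : ℝ,
      Filter.Tendsto (fun t : ℝ =>
          (Real.arctan (t - Real.cos (1 / t + σ / t ^ 2) / Real.sin (1 / t + σ / t ^ 2)) +
            Real.arctan (Real.cos (1 / t + σ / t ^ 2) / Real.sin (1 / t + σ / t ^ 2))) /
            Real.sin (1 / t + σ / t ^ 2) / t)
        Filter.atTop (nhds (Real.pi / 2 + Real.arctan σ))) ∧
    ∀ δ : ℝ, 0 < δ → ∃ C : ℝ, ∀ t : ℝ, 2 / δ ≤ t → ∀ σ : ℝ, |σ| ≤ 1 / δ →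
      |(Real.arctan (t - Real.cos (1 / t + σ / t ^ 2) / Real.sin (1 / t + σ / t ^ 2)) +
          Real.arctan (Real.cos (1 / t + σ / t ^ 2) / Real.sin (1 / t + σ / t ^ 2))) /
          Real.sin (1 / t + σ / t ^ 2) / t -
        (Real.pi / 2 + Real.arctan σ)| ≤ C / t := by
  have key : ∀ δ : ℝ, 0 < δ → ∃ C : ℝ, ∀ t : ℝ, 2 / δ ≤ t → ∀ σ : ℝ, |σ| ≤ 1 / δ →
      |(Real.arctan (t - Real.cos (1 / t + σ / t ^ 2) / Real.sin (1 / t + σ / t ^ 2)) +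
          Real.arctan (Real.cos (1 / t + σ / t ^ 2) / Real.sin (1 / t + σ / t ^ 2))) /
          Real.sin (1 / t + σ / t ^ 2) / t -
        (Real.pi / 2 + Real.arctan σ)| ≤ C / t := by
    intro δ hδ
    refine ⟨2 / δ ^ 2 + 9 / δ + 60, fun t htδ σ hσ => ?_⟩
    rcases le_or_gt 3 t with h3 | h3
    · exact asymp_bound δ t σ hδ htδ h3 hσ
    · have ht0 : (0:ℝ) < t := lt_of_lt_of_le (by positivity) htδ
      have hG := core_bound (1 / t + σ / t ^ 2) t ht0 h3.le
      set G : ℝ := (Real.arctan (t - Real.cos (1 / t + σ / t ^ 2) / Real.sin (1 / t + σ / t ^ 2)) +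
          Real.arctan (Real.cos (1 / t + σ / t ^ 2) / Real.sin (1 / t + σ / t ^ 2))) /
          Real.sin (1 / t + σ / t ^ 2) with hGdef
      set L : ℝ := Real.pi / 2 + Real.arctan σ with hLdef
      have hL : |L| ≤ Real.pi := by
        rw [hLdef, abs_le]
        constructor
        · linarith [Real.neg_pi_div_two_lt_arctan σ, Real.pi_pos]
        · linarith [Real.arctan_lt_pi_div_two σ]
      have h1 : |G| / t ≤ 10 * Real.pi / t :=
        div_le_div₀ (by positivity) hG ht0 le_rfl
      have h2 : |L| ≤ 3 * Real.pi / t := by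
        rw [le_div_iff₀ ht0]
        nlinarith only [hL, h3, Real.pi_pos, abs_nonneg L, ht0]
      have hC13 : 13 * Real.pi ≤ 2 / δ ^ 2 + 9 / δ + 60 := by
        have hp4 := Real.pi_le_four
        have e1 : (0:ℝ) ≤ 2 / δ ^ 2 := by positivity
        have e2 : (0:ℝ) ≤ 9 / δ := by positivity
        linarith only [hp4, e1, e2]
      have h4 : 13 * Real.pi / t ≤ (2 / δ ^ 2 + 9 / δ + 60) / t :=
        div_le_div₀ (by positivity) hC13 ht0 le_rfl
      calc |G / t - L| ≤ |G / t| + |L| := abs_sub _ _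
        _ = |G| / t + |L| := by rw [abs_div, abs_of_pos ht0]
        _ ≤ 10 * Real.pi / t + 3 * Real.pi / t := add_le_add h1 h2
        _ = 13 * Real.pi / t := by ring
        _ ≤ (2 / δ ^ 2 + 9 / δ + 60) / t := h4
  constructor
  · intro σ
    have hδ0 : (0:ℝ) < 1 / (|σ| + 1) := by positivity
    obtain ⟨C, hC⟩ := key (1 / (|σ| + 1)) hδ0
    have hσ1 : |σ| ≤ 1 / (1 / (|σ| + 1)) := by
      rw [one_div_one_div]; linarith [abs_nonneg σ]
    rw [← tendsto_sub_nhds_zero_iff]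
    apply squeeze_zero_norm' (a := fun t : ℝ => C / t)
    · filter_upwards [Filter.eventually_ge_atTop (2 / (1 / (|σ| + 1)))] with t ht
      rw [Real.norm_eq_abs]
      exact hC t ht σ hσ1
    · exact tendsto_const_nhds.div_atTop Filter.tendsto_id
  · exact key
end
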